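/- Let Φ be a finite set of nonzero weights of a torus T lying in an open half-space, all with one-dimensional weight spaces. Suppose α ∈ Φ is integrally indecomposable in Φ, and suppose P ∈ ℤ[X(T)] is a finite sum P = Σ_t ε_t ∏_{i∈t}(1 − e^{−γ_i}) over a collection of subsets t of indices, with γ_i ∈ Φ distinct, ε_t ∈ {±1}, α = γ_j, and Σ_{t : j ∉ t} ε_t ≠ 0. Then in the formal expansion of P / ∏_{γ∈Φ}(1 − e^{−γ}), the coefficient of e^{−α} equals Σ_{t: j∉t} ε_t and in particular is nonzero. -/

import Mathlib

/-- The number of ways to write `γ` as a nonnegative integer linear combination of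
elements of the finite set `Φ`; the coefficient of `e^{-γ}` in the formal expansion
of `∏_{β ∈ Φ} (1 - e^{-β})⁻¹`. -/
noncomputable def nreps {M : Type*} [AddCommGroup M] (Φ : Finset M) (γ : M) : ℕ :=
  Set.ncard {c : M → ℕ | (∀ β ∉ Φ, c β = 0) ∧ ∑ β ∈ Φ, c β • β = γ}

/-- The coefficient of `e^{-γ}` in the formal power series expansion of
`P / ∏_{β ∈ Φ} (1 - e^{-β})`. -/
noncomputable def expansionCoeff {M : Type*} [AddCommGroup M] (Φ : Finset M)
    (P : AddMonoidAlgebra ℤ M) (γ : M) : ℤ :=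
  ∑ μ ∈ P.coeff.support, P.coeff μ * (nreps Φ (γ + μ) : ℤ)


open Finset

lemma nreps_h_eq {M : Type*} [AddCommGroup M] (Φ : Finset M) (h : M →+ ℝ)
    {γ' : M} {c : M → ℕ} (hc : ∑ β ∈ Φ, c β • β = γ') :
    h γ' = ∑ β ∈ Φ, (c β : ℝ) * h β := by
  rw [← hc, map_sum]
  exact Finset.sum_congr rfl fun β _ => by rw [map_nsmul, nsmul_eq_mul]

lemma nreps_of_neg {M : Type*} [AddCommGroup M] (Φ : Finset M) (h : M →+ ℝ)
    (hpos : ∀ β ∈ Φ, 0 < h β) {γ' : M} (hneg : h γ' < 0) : nreps Φ γ' = 0 := by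
  have hempty : {c : M → ℕ | (∀ β ∉ Φ, c β = 0) ∧ ∑ β ∈ Φ, c β • β = γ'} = ∅ := by
    ext c
    simp only [Set.mem_setOf_eq, Set.mem_empty_iff_false, iff_false, not_and]
    intro _ hsum
    have h1 := nreps_h_eq Φ h hsum
    have h2 : (0:ℝ) ≤ ∑ β ∈ Φ, (c β : ℝ) * h β :=
      Finset.sum_nonneg fun β hβ => mul_nonneg (Nat.cast_nonneg _) (hpos β hβ).le
    linarith
  rw [nreps, hempty, Set.ncard_empty]

lemma nreps_zero {M : Type*} [AddCommGroup M] (Φ : Finset M) (h : M →+ ℝ)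
    (hpos : ∀ β ∈ Φ, 0 < h β) : nreps Φ 0 = 1 := by
  have hset : {c : M → ℕ | (∀ β ∉ Φ, c β = 0) ∧ ∑ β ∈ Φ, c β • β = 0}
      = {fun _ => 0} := by
    ext c
    simp only [Set.mem_setOf_eq, Set.mem_singleton_iff]
    constructor
    · rintro ⟨h0, hsum⟩
      have h1 := nreps_h_eq Φ h hsum
      rw [map_zero] at h1
      have h2 : ∀ β ∈ Φ, (c β : ℝ) * h β = 0 := by
        intro β hβ
        have := (Finset.sum_eq_zero_iff_of_nonneg
          (fun β hβ => mul_nonneg (Nat.cast_nonneg _) (hpos β hβ).le)).mp h1.symm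
        exact this β hβ
      funext β
      by_cases hβ : β ∈ Φ
      · have := h2 β hβ
        have hne : h β ≠ 0 := (hpos β hβ).ne'
        have : (c β : ℝ) = 0 := by
          rcases mul_eq_zero.mp this with h' | h'
          · exact h'
          · exact absurd h' hne
        exact_mod_cast this
      · exact h0 β hβ
    · rintro rfl
      exact ⟨fun _ _ => rfl, by simp⟩
  rw [nreps, hset, Set.ncard_singleton]

lemma nreps_alpha {M : Type*} [AddCommGroup M] (Φ : Finset M) (h : M →+ ℝ)
    (hpos : ∀ β ∈ Φ, 0 < h β) (α : M) (hαΦ : α ∈ Φ)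
    (hind : ¬ ∃ c : M → ℕ, (∀ β ∉ Φ, c β = 0) ∧ 2 ≤ ∑ β ∈ Φ, c β ∧
      ∑ β ∈ Φ, c β • β = α) : nreps Φ α = 1 := by
  classical
  have hset : {c : M → ℕ | (∀ β ∉ Φ, c β = 0) ∧ ∑ β ∈ Φ, c β • β = α}
      = {fun β => if β = α then 1 else 0} := by
    ext c
    simp only [Set.mem_setOf_eq, Set.mem_singleton_iff]
    constructor
    · rintro ⟨h0, hsum⟩
      -- the total coefficient
      rcases Nat.lt_or_ge (∑ β ∈ Φ, c β) 2 with hN | hN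
      · interval_cases hN' : (∑ β ∈ Φ, c β)
        · -- total 0 : α = 0, contradiction with h α > 0
          exfalso
          have hz : ∀ β ∈ Φ, c β = 0 := by
            intro β hβ
            exact (Finset.sum_eq_zero_iff.mp hN') β hβ
          have : α = 0 := by
            rw [← hsum]
            exact Finset.sum_eq_zero fun β hβ => by rw [hz β hβ, zero_smul]
          have hp := hpos α hαΦ
          rw [this, map_zero] at hp
          linarith
        · -- total 1
          obtain ⟨β₀, hβ₀Φ, hβ₀⟩ : ∃ β₀ ∈ Φ, c β₀ ≠ 0 := by
            by_contra hc
            push_neg at hc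
            rw [Finset.sum_eq_zero hc] at hN'
            omega
          have hsplit := Finset.add_sum_erase Φ c hβ₀Φ
          rw [hN'] at hsplit
          have hc1 : c β₀ = 1 := by omega
          have hrest : ∑ β ∈ Φ.erase β₀, c β = 0 := by omega
          have hz : ∀ β ∈ Φ, β ≠ β₀ → c β = 0 := by
            intro β hβ hne
            exact (Finset.sum_eq_zero_iff.mp hrest) β (Finset.mem_erase.mpr ⟨hne, hβ⟩)
          have hαβ : α = β₀ := by
            rw [← hsum, Finset.sum_eq_single β₀ (fun β hβ hne => by rw [hz β hβ hne, zero_smul])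
              (fun habs => absurd hβ₀Φ habs), hc1, one_smul]
          funext β
          by_cases hβ : β ∈ Φ
          · by_cases hβα : β = α
            · rw [if_pos hβα, hβα, hαβ, hc1]
            · rw [if_neg hβα]
              exact hz β hβ (fun hh => hβα (hh.trans hαβ.symm))
          · rw [if_neg (fun hh : β = α => hβ (hh ▸ hαΦ)), h0 β hβ]
      · exact absurd ⟨c, h0, hN, hsum⟩ hind
    · rintro rfl
      refine ⟨fun β hβ => if_neg (fun hh : β = α => hβ (hh ▸ hαΦ)), ?_⟩
      have : ∀ β ∈ Φ, (if β = α then 1 else 0) • β = if β = α then β else 0 := by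
        intro β _
        split <;> simp
      rw [Finset.sum_congr rfl this]
      simpa using Finset.sum_ite_eq' Φ α (fun β => β) |>.trans (if_pos hαΦ)
  rw [nreps, hset, Set.ncard_singleton]
lemma nreps_sub {M : Type*} [AddCommGroup M] (Φ : Finset M) (h : M →+ ℝ)
    (hpos : ∀ β ∈ Φ, 0 < h β) (α : M) (hαΦ : α ∈ Φ)
    (hind : ¬ ∃ c : M → ℕ, (∀ β ∉ Φ, c β = 0) ∧ 2 ≤ ∑ β ∈ Φ, c β ∧
      ∑ β ∈ Φ, c β • β = α)
    {ι : Type*} [DecidableEq ι]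
    (γ : ι → M) (hγinj : Function.Injective γ) (hγΦ : ∀ i, γ i ∈ Φ)
    (j : ι) (hj : γ j = α) (s : Finset ι) :
    nreps Φ (α - ∑ i ∈ s, γ i) = if s = ∅ then 1 else if s = {j} then 1 else 0 := by
  classical
  by_cases hs0 : s = ∅
  · rw [if_pos hs0, hs0, Finset.sum_empty, sub_zero]
    exact nreps_alpha Φ h hpos α hαΦ hind
  rw [if_neg hs0]
  by_cases hsj : s = {j}
  · rw [if_pos hsj, hsj, Finset.sum_singleton, hj, sub_self]
    exact nreps_zero Φ h hpos
  rw [if_neg hsj]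
  by_cases hjs : j ∈ s
  · -- j ∈ s and s ≠ {j} : there is another element, so h-value is negative
    obtain ⟨i₀, hi₀s, hi₀j⟩ : ∃ i₀ ∈ s, i₀ ≠ j := by
      by_contra hc
      push_neg at hc
      exact hsj (Finset.eq_singleton_iff_unique_mem.mpr ⟨hjs, hc⟩)
    apply nreps_of_neg Φ h hpos
    have hsum : h (γ j) + h (γ i₀) ≤ ∑ i ∈ s, h (γ i) := by
      rw [← Finset.add_sum_erase s (fun i => h (γ i)) hjs]
      gcongr
      exact Finset.single_le_sum (f := fun i => h (γ i))
        (fun i _ => (hpos _ (hγΦ i)).le) (Finset.mem_erase.mpr ⟨hi₀j, hi₀s⟩)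
    have hmap : h (α - ∑ i ∈ s, γ i) = h α - ∑ i ∈ s, h (γ i) := by
      rw [map_sub, map_sum]
    rw [hmap, hj] at *
    have := hpos _ (hγΦ i₀)
    linarith
  · -- j ∉ s, s ≠ ∅ : no representations
    have hempty : {c : M → ℕ | (∀ β ∉ Φ, c β = 0) ∧
        ∑ β ∈ Φ, c β • β = α - ∑ i ∈ s, γ i} = ∅ := by
      ext c
      simp only [Set.mem_setOf_eq, Set.mem_empty_iff_false, iff_false, not_and]
      intro h0 hsum
      -- combined coefficient function
      set c' : M → ℕ := fun β => c β + (s.filter (fun i => γ i = β)).card with hc'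
      have hfib : ∀ (f : ι → M), ∑ β ∈ Φ, ∑ i ∈ s.filter (fun i => γ i = β), f i
          = ∑ i ∈ s, f i :=
        fun f => Finset.sum_fiberwise_of_maps_to (fun i _ => hγΦ i) f
      have hcard : ∑ β ∈ Φ, (s.filter (fun i => γ i = β)).card = s.card := by
        simpa using Finset.sum_fiberwise_of_maps_to (fun i (_ : i ∈ s) => hγΦ i)
          (fun _ => (1 : ℕ))
      have hsum' : ∑ β ∈ Φ, c' β • β = α := by
        have h2 : ∑ β ∈ Φ, (s.filter (fun i => γ i = β)).card • β = ∑ i ∈ s, γ i := by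
          rw [← hfib γ]
          refine Finset.sum_congr rfl fun β _ => ?_
          rw [Finset.sum_congr rfl (fun i hi => (Finset.mem_filter.mp hi).2),
            Finset.sum_const]
        simp only [hc', add_smul, Finset.sum_add_distrib, hsum, h2]
        abel
      have h0' : ∀ β ∉ Φ, c' β = 0 := by
        intro β hβ
        have : s.filter (fun i => γ i = β) = ∅ := by
          rw [Finset.filter_eq_empty_iff]
          intro i _ hgi
          exact hβ (hgi ▸ hγΦ i)
        simp [hc', h0 β hβ, this]
      have hN : ∑ β ∈ Φ, c' β = (∑ β ∈ Φ, c β) + s.card := by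
        simp [hc', Finset.sum_add_distrib, hcard]
      have hscard : 1 ≤ s.card := Finset.card_pos.mpr (Finset.nonempty_iff_ne_empty.mpr hs0)
      rcases Nat.lt_or_ge (∑ β ∈ Φ, c' β) 2 with hlt | hge
      · -- total is 1 : c = 0 and s = {i₀}, α = γ i₀ = γ j, contradiction
        have hc0 : ∑ β ∈ Φ, c β = 0 := by omega
        have hs1 : s.card = 1 := by omega
        obtain ⟨i₀, hi₀⟩ := Finset.card_eq_one.mp hs1
        have hcz : ∀ β ∈ Φ, c β = 0 := fun β hβ => (Finset.sum_eq_zero_iff.mp hc0) β hβ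
        have : α - ∑ i ∈ s, γ i = 0 := by
          rw [← hsum]
          exact Finset.sum_eq_zero fun β hβ => by rw [hcz β hβ, zero_smul]
        rw [hi₀, Finset.sum_singleton, sub_eq_zero] at this
        have : i₀ = j := hγinj (by rw [← this, hj])
        exact hjs (by rw [← this, hi₀]; exact Finset.mem_singleton_self i₀)
      · exact hind ⟨c', h0', hge, hsum'⟩
    rw [nreps, hempty, Set.ncard_empty]
lemma prod_one_sub_single {M : Type*} [AddCommGroup M] {ι : Type*} [DecidableEq ι]
    (γ : ι → M) (t : Finset ι) :
    ∏ i ∈ t, (1 - (AddMonoidAlgebra.single (-(γ i)) (1 : ℤ) : AddMonoidAlgebra ℤ M))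
      = ∑ s ∈ t.powerset,
        AddMonoidAlgebra.single (-(∑ i ∈ s, γ i)) ((-1 : ℤ) ^ s.card) := by
  classical
  have h1 : ∀ i : ι, (1 : AddMonoidAlgebra ℤ M) - AddMonoidAlgebra.single (-(γ i)) 1
      = AddMonoidAlgebra.single (-(γ i)) (-1) + 1 := by
    intro i
    rw [sub_eq_add_neg, add_comm]
    congr 1
    exact (AddMonoidAlgebra.single_neg _ _).symm
  rw [Finset.prod_congr rfl fun i _ => h1 i, Finset.prod_add]
  refine Finset.sum_congr rfl fun s _ => ?_
  rw [Finset.prod_const_one, mul_one, AddMonoidAlgebra.prod_single,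
    Finset.prod_const, ← Finset.sum_neg_distrib]

theorem stmt18 {M : Type*} [AddCommGroup M] (Φ : Finset M)
    (h : M →+ ℝ) (hpos : ∀ β ∈ Φ, 0 < h β)
    (α : M) (hαΦ : α ∈ Φ)
    (hind : ¬ ∃ c : M → ℕ, (∀ β ∉ Φ, c β = 0) ∧ 2 ≤ ∑ β ∈ Φ, c β ∧
      ∑ β ∈ Φ, c β • β = α)
    {ι : Type*} [Fintype ι] [DecidableEq ι]
    (γ : ι → M) (hγinj : Function.Injective γ) (hγΦ : ∀ i, γ i ∈ Φ)
    (j : ι) (hj : γ j = α)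
    (T : Finset (Finset ι)) (ε : Finset ι → ℤ) (hε : ∀ t ∈ T, ε t = 1 ∨ ε t = -1)
    (P : AddMonoidAlgebra ℤ M)
    (hP : P = ∑ t ∈ T, ε t •
      ∏ i ∈ t, (1 - (AddMonoidAlgebra.single (-(γ i)) (1 : ℤ) : AddMonoidAlgebra ℤ M)))
    (hne : (∑ t ∈ T.filter (fun t => j ∉ t), ε t) ≠ 0) :
    expansionCoeff Φ P α = ∑ t ∈ T.filter (fun t => j ∉ t), ε t ∧
      expansionCoeff Φ P α ≠ 0 := by
  classical
  suffices hmain : expansionCoeff Φ P α = ∑ t ∈ T.filter (fun t => j ∉ t), ε t by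
    exact ⟨hmain, hmain ▸ hne⟩
  -- the coefficient-extraction additive hom
  set F : AddMonoidAlgebra ℤ M →+ ℤ :=
    { toFun := fun p => p.coeff.sum (fun μ a => a * (nreps Φ (α + μ) : ℤ)),
      map_zero' := Finsupp.sum_zero_index,
      map_add' := fun p q => by
        simp only [AddMonoidAlgebra.coeff_add]
        exact Finsupp.sum_add_index' (fun μ => zero_mul _)
          (fun μ b₁ b₂ => add_mul _ _ _) } with hF
  have hFP : expansionCoeff Φ P α = F P := rfl
  have hFsingle : ∀ (μ : M) (a : ℤ),
      F (AddMonoidAlgebra.single μ a) = a * (nreps Φ (α + μ) : ℤ) := by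
    intro μ a
    rw [hF]
    show (AddMonoidAlgebra.single μ a).coeff.sum (fun ν b => b * (nreps Φ (α + ν) : ℤ))
      = a * (nreps Φ (α + μ) : ℤ)
    exact Finsupp.sum_single_index (zero_mul _)
  rw [hFP, hP, map_sum]
  have hterm : ∀ t ∈ T, F (ε t •
      ∏ i ∈ t, (1 - (AddMonoidAlgebra.single (-(γ i)) (1 : ℤ) : AddMonoidAlgebra ℤ M)))
      = ε t * (if j ∈ t then 0 else 1) := by
    intro t _
    rw [map_zsmul, prod_one_sub_single, map_sum]
    have hs : ∀ s ∈ t.powerset,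
        F (AddMonoidAlgebra.single (-(∑ i ∈ s, γ i)) ((-1 : ℤ) ^ s.card))
          = (if s = ∅ then 1 else 0) + (if s = {j} then -1 else 0) := by
      intro s hs
      rw [hFsingle, ← sub_eq_add_neg,
        nreps_sub Φ h hpos α hαΦ hind γ hγinj hγΦ j hj s]
      by_cases h0 : s = ∅
      · subst h0; simp [(Finset.singleton_ne_empty j).symm]
      by_cases h1 : s = {j}
      · subst h1; simp [Finset.singleton_ne_empty]
      · simp [h0, h1]
    rw [Finset.sum_congr rfl hs, Finset.sum_add_distrib,
      Finset.sum_ite_eq' t.powerset (∅ : Finset ι) (fun _ => (1:ℤ)),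
      Finset.sum_ite_eq' t.powerset ({j} : Finset ι) (fun _ => (-1:ℤ)),
      if_pos (Finset.empty_mem_powerset t)]
    have : ({j} : Finset ι) ∈ t.powerset ↔ j ∈ t := by
      simp [Finset.mem_powerset, Finset.singleton_subset_iff]
    by_cases hjt : j ∈ t
    · rw [if_pos (this.mpr hjt), if_pos hjt]
      simp
    · rw [if_neg (fun hh => hjt (this.mp hh)), if_neg hjt]
      simp
  rw [Finset.sum_congr rfl hterm, Finset.sum_filter]
  refine Finset.sum_congr rfl fun t _ => ?_
  by_cases hjt : j ∈ t <;> simp [hjt]
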